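/- arXiv:2209.03250 — 4 statements merged into one kernel-verified Lean document; each statement's English description precedes it below -/
import Mathlib

section
/- Asymptotic convergence of the pose and rate tracking errors (Theorem 2, assembled form): suppose Λ ∈ ℝ^{6×6} is symmetric positive definite, p̃ : [0,∞) → ℝ⁶ is continuously differentiable with ṗ̃(t) = −Λ p̃(t) + s(t), where s : [0,∞) → ℝ⁶ is continuous with ∫₀^∞ ‖s(t)‖² dt < ∞; suppose ν̃_r(t) = P(t) s(t) where P : [0,∞) → ℝ^{6×6} is continuous and uniformly bounded (sup_t ‖P(t)‖ < ∞), ν̃_r is continuously differentiable with ν̃̇_r uniformly bounded, and define ν̃(t) = ν̃_r(t) − P(t) Λ p̃(t). Then p̃(t) → 0, ν̃_r(t) → 0, and ν̃(t) → 0 as t → ∞. -/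
open Matrix MeasureTheory Filter Topology

attribute [local instance] Matrix.normedAddCommGroup Matrix.normedSpace

lemma dot_self_nonneg' (v : Fin 6 → ℝ) : 0 ≤ v ⬝ᵥ v :=
  Finset.sum_nonneg fun i _ => mul_self_nonneg _

lemma sq_norm_le_dot (v : Fin 6 → ℝ) : ‖v‖ ^ 2 ≤ v ⬝ᵥ v := by
  obtain ⟨i, hi⟩ := Finset.exists_max_image Finset.univ (fun i => ‖v i‖) ⟨0, Finset.mem_univ 0⟩
  have hnorm : ‖v‖ = ‖v i‖ := by
    apply le_antisymm
    · exact (pi_norm_le_iff_of_nonneg (norm_nonneg _)).2 fun j => hi.2 j (Finset.mem_univ j)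
    · exact norm_le_pi_norm v i
  rw [hnorm]
  calc ‖v i‖ ^ 2 = v i * v i := by rw [Real.norm_eq_abs, sq_abs, sq]
    _ ≤ v ⬝ᵥ v := Finset.single_le_sum (f := fun j => v j * v j)
        (fun j _ => mul_self_nonneg _) (Finset.mem_univ i)

lemma norm_le_sqrt_dot (v : Fin 6 → ℝ) : ‖v‖ ≤ Real.sqrt (v ⬝ᵥ v) :=
  (Real.le_sqrt (norm_nonneg v) (dot_self_nonneg' v)).2 (sq_norm_le_dot v)

lemma dot_cauchy (u v : Fin 6 → ℝ) : (u ⬝ᵥ v) ^ 2 ≤ (u ⬝ᵥ u) * (v ⬝ᵥ v) := by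
  have := Finset.sum_mul_sq_le_sq_mul_sq Finset.univ u v
  simpa [dotProduct, sq] using this

lemma dot_cauchy' (u v : Fin 6 → ℝ) :
    u ⬝ᵥ v ≤ Real.sqrt (u ⬝ᵥ u) * Real.sqrt (v ⬝ᵥ v) := by
  calc u ⬝ᵥ v ≤ |u ⬝ᵥ v| := le_abs_self _
    _ = Real.sqrt ((u ⬝ᵥ v) ^ 2) := (Real.sqrt_sq_eq_abs _).symm
    _ ≤ Real.sqrt ((u ⬝ᵥ u) * (v ⬝ᵥ v)) := Real.sqrt_le_sqrt (dot_cauchy u v)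
    _ = Real.sqrt (u ⬝ᵥ u) * Real.sqrt (v ⬝ᵥ v) := Real.sqrt_mul (dot_self_nonneg' u) _

lemma continuous_dot_self : Continuous fun x : Fin 6 → ℝ => x ⬝ᵥ x := by
  unfold dotProduct
  exact continuous_finset_sum _ fun i _ => (continuous_apply i).mul (continuous_apply i)

lemma mulVec_dot_bound (A : Matrix (Fin 6) (Fin 6) ℝ) :
    ∃ C : ℝ, 0 ≤ C ∧ ∀ x : Fin 6 → ℝ, (A *ᵥ x) ⬝ᵥ (A *ᵥ x) ≤ C * (x ⬝ᵥ x) := by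
  refine ⟨∑ i, A i ⬝ᵥ A i, Finset.sum_nonneg fun i _ => dot_self_nonneg' _, fun x => ?_⟩
  have h1 : ∀ i, (A *ᵥ x) i * (A *ᵥ x) i ≤ (A i ⬝ᵥ A i) * (x ⬝ᵥ x) := by
    intro i
    have := dot_cauchy (A i) x
    simpa [Matrix.mulVec, sq] using this
  calc (A *ᵥ x) ⬝ᵥ (A *ᵥ x) = ∑ i, (A *ᵥ x) i * (A *ᵥ x) i := rfl
    _ ≤ ∑ i, (A i ⬝ᵥ A i) * (x ⬝ᵥ x) := Finset.sum_le_sum fun i _ => h1 i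
    _ = (∑ i, A i ⬝ᵥ A i) * (x ⬝ᵥ x) := by rw [Finset.sum_mul]

lemma posdef_coercive (Λ : Matrix (Fin 6) (Fin 6) ℝ) (hΛ : Λ.PosDef) :
    ∃ m : ℝ, 0 < m ∧ ∀ x : Fin 6 → ℝ, m * (x ⬝ᵥ x) ≤ x ⬝ᵥ (Λ *ᵥ x) := by
  set S : Set (Fin 6 → ℝ) := {x | x ⬝ᵥ x = 1} with hS
  have hq : Continuous fun x : Fin 6 → ℝ => x ⬝ᵥ x := continuous_dot_self
  have hf : Continuous fun x : Fin 6 → ℝ => x ⬝ᵥ (Λ *ᵥ x) := by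
    unfold dotProduct Matrix.mulVec
    exact continuous_finset_sum _ fun i _ => (continuous_apply i).mul
      (continuous_finset_sum _ fun j _ => (continuous_const.mul (continuous_apply j)))
  have hSc : IsCompact S := by
    apply Metric.isCompact_of_isClosed_isBounded
    · exact isClosed_eq hq continuous_const
    · rw [Metric.isBounded_iff_subset_closedBall 0]
      refine ⟨1, fun x hx => ?_⟩
      have hx' : x ⬝ᵥ x = 1 := hx
      simp only [Metric.mem_closedBall, dist_zero_right]
      nlinarith [norm_nonneg x, sq_norm_le_dot x]
  have hne : S.Nonempty := by
    refine ⟨Pi.single 0 1, ?_⟩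
    simp [hS, dotProduct, Pi.single_apply]
  obtain ⟨x₀, hx₀S, hmin⟩ := hSc.exists_isMinOn hne hf.continuousOn
  have hx₀ne : x₀ ≠ 0 := by
    intro h
    have := hx₀S
    rw [h] at this
    simp [hS, dotProduct] at this
  have hm : 0 < x₀ ⬝ᵥ (Λ *ᵥ x₀) := by
    have := hΛ.dotProduct_mulVec_pos hx₀ne
    simpa using this
  refine ⟨x₀ ⬝ᵥ (Λ *ᵥ x₀), hm, fun x => ?_⟩
  rcases eq_or_ne x 0 with rfl | hx
  · simp
  · set r : ℝ := Real.sqrt (x ⬝ᵥ x) with hrdef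
    have hxx : 0 < x ⬝ᵥ x := by
      rcases (dot_self_nonneg' x).lt_or_eq with h | h
      · exact h
      · exfalso; apply hx; funext i
        by_contra hxi
        have : 0 < x i * x i := mul_self_pos.2 (by simpa using hxi)
        have hle : x i * x i ≤ x ⬝ᵥ x := Finset.single_le_sum
          (f := fun j => x j * x j) (fun j _ => mul_self_nonneg _) (Finset.mem_univ i)
        linarith [h.symm ▸ hle]
    have hr : 0 < r := Real.sqrt_pos.2 hxx
    have hr2 : r * r = x ⬝ᵥ x := Real.mul_self_sqrt hxx.le
    have hy : (r⁻¹ • x) ∈ S := by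
      show (r⁻¹ • x) ⬝ᵥ (r⁻¹ • x) = 1
      rw [smul_dotProduct, dotProduct_smul, smul_eq_mul, smul_eq_mul, ← hr2]
      field_simp
    have key : (r⁻¹ • x) ⬝ᵥ (Λ *ᵥ (r⁻¹ • x)) = (r⁻¹ * r⁻¹) * (x ⬝ᵥ (Λ *ᵥ x)) := by
      rw [Matrix.mulVec_smul, smul_dotProduct, dotProduct_smul,
        smul_eq_mul, smul_eq_mul]
      ring
    have hmin2 : x₀ ⬝ᵥ (Λ *ᵥ x₀) ≤ (r⁻¹ • x) ⬝ᵥ (Λ *ᵥ (r⁻¹ • x)) := hmin hy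
    have h2 : x₀ ⬝ᵥ (Λ *ᵥ x₀) ≤ (r⁻¹ * r⁻¹) * (x ⬝ᵥ (Λ *ᵥ x)) := key ▸ hmin2
    calc (x₀ ⬝ᵥ (Λ *ᵥ x₀)) * (x ⬝ᵥ x)
        ≤ ((r⁻¹ * r⁻¹) * (x ⬝ᵥ (Λ *ᵥ x))) * (x ⬝ᵥ x) :=
          mul_le_mul_of_nonneg_right h2 (dot_self_nonneg' x)
      _ = x ⬝ᵥ (Λ *ᵥ x) := by
          rw [← hr2]; field_simp

lemma tail_tendsto (h : ℝ → ℝ) (hint : IntegrableOn h (Set.Ici 0)) :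
    Tendsto (fun T => ∫ t in Set.Ioi T, h t) atTop (nhds 0) := by
  have hIoi : IntegrableOn h (Set.Ioi 0) := hint.mono_set Set.Ioi_subset_Ici_self
  have hconv : Tendsto (fun T => ∫ t in (0:ℝ)..T, h t) atTop (nhds (∫ t in Set.Ioi 0, h t)) :=
    intervalIntegral_tendsto_integral_Ioi 0 hIoi tendsto_id
  have heq : ∀ᶠ T in atTop, (∫ t in Set.Ioi 0, h t) - ∫ t in (0:ℝ)..T, h t
      = ∫ t in Set.Ioi T, h t := by
    filter_upwards [eventually_ge_atTop (0:ℝ)] with T hT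
    have hsplit : Set.Ioc 0 T ∪ Set.Ioi T = Set.Ioi 0 := Set.Ioc_union_Ioi_eq_Ioi hT
    have hdisj : Disjoint (Set.Ioc 0 T) (Set.Ioi T) := Set.Ioc_disjoint_Ioi le_rfl
    have h1 : IntegrableOn h (Set.Ioc 0 T) := hIoi.mono_set Set.Ioc_subset_Ioi_self
    have h2 : IntegrableOn h (Set.Ioi T) :=
      hint.mono_set fun x hx => le_of_lt (lt_of_le_of_lt hT hx)
    have := MeasureTheory.setIntegral_union hdisj measurableSet_Ioi h1 h2
    rw [hsplit] at this
    rw [intervalIntegral.integral_of_le hT, this]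
    ring
  have := hconv.const_sub (∫ t in Set.Ioi 0, h t)
  rw [sub_self] at this
  exact this.congr' heq

lemma barbalatL2 (f : ℝ → Fin 6 → ℝ) (L : ℝ) (hL : 0 < L)
    (hf : ∀ t₁ ∈ Set.Ici (0:ℝ), ∀ t₂ ∈ Set.Ici (0:ℝ), ‖f t₁ - f t₂‖ ≤ L * |t₁ - t₂|)
    (hint : IntegrableOn (fun t => f t ⬝ᵥ f t) (Set.Ici 0)) :
    Tendsto f atTop (nhds 0) := by
  rw [tendsto_zero_iff_norm_tendsto_zero]
  rw [Metric.tendsto_atTop]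
  intro ε hε
  set δ : ℝ := ε / (2 * L) with hδdef
  have hδ : 0 < δ := div_pos hε (by linarith)
  have htail := tail_tendsto _ hint
  rw [Metric.tendsto_atTop] at htail
  obtain ⟨T, hT⟩ := htail ((ε / 2) ^ 2 * δ) (by positivity)
  refine ⟨max T 0, fun t ht => ?_⟩
  have ht0 : (0:ℝ) ≤ t := le_trans (le_max_right _ _) ht
  have htT : T ≤ t := le_trans (le_max_left _ _) ht
  rw [Real.dist_eq, sub_zero, abs_of_nonneg (norm_nonneg _)]
  by_contra hcon
  push_neg at hcon
  have hlow : ∀ τ ∈ Set.Ioc t (t + δ), (ε/2)^2 ≤ f τ ⬝ᵥ f τ := by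
    intro τ hτ
    have hτ0 : (0:ℝ) ≤ τ := le_trans ht0 hτ.1.le
    have hd : ‖f t - f τ‖ ≤ L * |t - τ| := hf t ht0 τ hτ0
    have habs : |t - τ| ≤ δ := by
      rw [abs_of_nonpos (by linarith [hτ.1.le])]
      linarith [hτ.2]
    have h1 : ‖f τ‖ ≥ ε - L * δ := by
      have := norm_sub_norm_le (f t) (f τ)
      have hLd : L * |t - τ| ≤ L * δ := mul_le_mul_of_nonneg_left habs hL.le
      linarith
    have hLδ : L * δ = ε / 2 := by
      rw [hδdef]; field_simp
    have h2 : ε / 2 ≤ ‖f τ‖ := by rw [hLδ] at h1; linarith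
    calc (ε/2)^2 ≤ ‖f τ‖^2 := by nlinarith [norm_nonneg (f τ)]
      _ ≤ f τ ⬝ᵥ f τ := sq_norm_le_dot _
  have hi2 : IntegrableOn (fun τ => f τ ⬝ᵥ f τ) (Set.Ioi t) :=
    hint.mono_set fun x hx => le_of_lt (lt_of_le_of_lt ht0 hx)
  have hi1 : IntegrableOn (fun τ => f τ ⬝ᵥ f τ) (Set.Ioc t (t + δ)) :=
    hi2.mono_set Set.Ioc_subset_Ioi_self
  have hlow1 : (ε/2)^2 * δ ≤ ∫ τ in Set.Ioc t (t + δ), f τ ⬝ᵥ f τ := by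
    have := MeasureTheory.setIntegral_ge_of_const_le (μ := volume)
      (measurableSet_Ioc) (by rw [Real.volume_Ioc]; exact ENNReal.ofReal_ne_top)
      hlow hi1
    rwa [Real.volume_real_Ioc_of_le (by linarith : t ≤ t + δ),
      (by ring : t + δ - t = δ), smul_eq_mul, mul_comm] at this
  have hlow2 : ∫ τ in Set.Ioc t (t + δ), f τ ⬝ᵥ f τ ≤ ∫ τ in Set.Ioi t, f τ ⬝ᵥ f τ := by
    apply MeasureTheory.setIntegral_mono_set hi2
    · exact Filter.Eventually.of_forall fun τ => dot_self_nonneg' _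
    · exact Filter.Eventually.of_forall fun τ hτ => hτ.1
  have := hT t htT
  rw [Real.dist_eq, sub_zero] at this
  have habs2 : ∫ τ in Set.Ioi t, f τ ⬝ᵥ f τ < (ε/2)^2 * δ := lt_of_abs_lt this
  linarith

lemma decay (W g : ℝ → ℝ) (m : ℝ) (hm : 0 < m)
    (hWc : ContinuousOn W (Set.Ici 0))
    (hW0 : ∀ t ∈ Set.Ici (0:ℝ), 0 ≤ W t)
    (hgc : ContinuousOn g (Set.Ici 0))
    (hg0 : ∀ t, 0 ≤ g t)
    (hgint : IntegrableOn g (Set.Ici 0))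
    (hW' : ∀ t ∈ Set.Ioi (0:ℝ), ∃ d, HasDerivAt W d t ∧ d ≤ -m * W t + g t) :
    Tendsto W atTop (nhds 0) := by
  set G : ℝ → ℝ := fun τ => Real.exp (m * τ) * g τ with hGdef
  have hexpc : Continuous fun τ : ℝ => Real.exp (m * τ) :=
    Real.continuous_exp.comp (continuous_const.mul continuous_id)
  have hGc : ContinuousOn G (Set.Ici 0) := hexpc.continuousOn.mul hgc
  have key : ∀ a ∈ Set.Ici (0:ℝ), ∀ b, a ≤ b →
      W b ≤ Real.exp (-(m * (b - a))) * W a + ∫ τ in Set.Ioi a, g τ := by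
    intro a ha b hab
    have hIccsub : Set.Icc a b ⊆ Set.Ici 0 := fun x hx => le_trans ha hx.1
    set u : ℝ → ℝ := fun t => Real.exp (m * t) * W t - ∫ τ in a..t, G τ with hudef
    have hGint_Icc : IntegrableOn G (Set.uIcc a b) := by
      apply (hGc.mono ?_).integrableOn_compact isCompact_uIcc
      rw [Set.uIcc_of_le hab]; exact hIccsub
    have huc : ContinuousOn u (Set.Icc a b) := by
      apply ContinuousOn.sub
      · exact (hexpc.continuousOn).mul (hWc.mono hIccsub)
      · have := intervalIntegral.continuousOn_primitive_interval hGint_Icc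
        rwa [Set.uIcc_of_le hab] at this
    have hderiv : ∀ x ∈ Set.Ioo a b, ∃ d', HasDerivAt u d' x ∧ d' ≤ 0 := by
      intro x hx
      have hx0 : 0 < x := lt_of_le_of_lt ha hx.1
      obtain ⟨d, hWd, hdle⟩ := hW' x hx0
      have hexpd : HasDerivAt (fun t : ℝ => Real.exp (m * t)) (Real.exp (m * x) * m) x := by
        simpa using ((hasDerivAt_id x).const_mul m).exp
      have hprod : HasDerivAt (fun t => Real.exp (m * t) * W t)
          (Real.exp (m * x) * m * W x + Real.exp (m * x) * d) x := hexpd.mul hWd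
      have hGx : ContinuousAt G x :=
        (hGc.mono Set.Ioi_subset_Ici_self).continuousAt (Ioi_mem_nhds hx0)
      have hGmeas : StronglyMeasurableAtFilter G (𝓝 x) volume :=
        (hGc.mono Set.Ioi_subset_Ici_self).stronglyMeasurableAtFilter isOpen_Ioi x hx0
      have hGii : IntervalIntegrable G volume a x := by
        apply (hGint_Icc.mono_set ?_).intervalIntegrable
        rw [Set.uIcc_of_le hab, Set.uIcc_of_le hx.1.le]
        exact Set.Icc_subset_Icc le_rfl hx.2.le
      have hintd : HasDerivAt (fun t => ∫ τ in a..t, G τ) (G x) x :=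
        intervalIntegral.integral_hasDerivAt_right hGii hGmeas hGx
      refine ⟨Real.exp (m * x) * m * W x + Real.exp (m * x) * d - G x,
        hprod.sub hintd, ?_⟩
      have hexp_pos : 0 < Real.exp (m * x) := Real.exp_pos _
      have : Real.exp (m * x) * d ≤ Real.exp (m * x) * (-m * W x + g x) :=
        mul_le_mul_of_nonneg_left hdle hexp_pos.le
      simp only [hGdef]
      nlinarith [this]
    have hanti : AntitoneOn u (Set.Icc a b) := by
      apply antitoneOn_of_deriv_nonpos (convex_Icc a b) huc
      · intro x hx
        rw [interior_Icc] at hx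
        obtain ⟨d', hd', _⟩ := hderiv x hx
        exact hd'.differentiableAt.differentiableWithinAt
      · intro x hx
        rw [interior_Icc] at hx
        obtain ⟨d', hd', hle⟩ := hderiv x hx
        rw [hd'.deriv]; exact hle
    have hub : u b ≤ u a := hanti (Set.left_mem_Icc.2 hab) (Set.right_mem_Icc.2 hab) hab
    have hua : u a = Real.exp (m * a) * W a := by simp [hudef]
    have hgint_Ioi : IntegrableOn g (Set.Ioi a) :=
      hgint.mono_set fun x hx => Set.mem_Ici.2 (le_trans (Set.mem_Ici.1 ha) (le_of_lt (Set.mem_Ioi.1 hx)))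
    have hGint_Ioc : IntegrableOn G (Set.Ioc a b) := by
      apply hGint_Icc.mono_set
      rw [Set.uIcc_of_le hab]; exact Set.Ioc_subset_Icc_self
    have hgint_Ioc : IntegrableOn (fun τ => Real.exp (m * b) * g τ) (Set.Ioc a b) :=
      ((hgint.mono_set (fun x hx => Set.mem_Ici.2 (le_trans (Set.mem_Ici.1 ha) hx.1.le))).const_mul _)
    have hint_le : ∫ τ in a..b, G τ ≤ Real.exp (m * b) * ∫ τ in Set.Ioi a, g τ := by
      rw [intervalIntegral.integral_of_le hab]
      calc ∫ τ in Set.Ioc a b, G τ ≤ ∫ τ in Set.Ioc a b, Real.exp (m * b) * g τ := by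
            apply MeasureTheory.setIntegral_mono_on hGint_Ioc hgint_Ioc measurableSet_Ioc
            intro τ hτ
            exact mul_le_mul_of_nonneg_right
              (Real.exp_le_exp.2 (mul_le_mul_of_nonneg_left hτ.2 hm.le)) (hg0 τ)
        _ = Real.exp (m * b) * ∫ τ in Set.Ioc a b, g τ := by
            rw [MeasureTheory.integral_const_mul]
        _ ≤ Real.exp (m * b) * ∫ τ in Set.Ioi a, g τ := by
            apply mul_le_mul_of_nonneg_left _ (Real.exp_pos _).le
            apply MeasureTheory.setIntegral_mono_set hgint_Ioi
              (Filter.Eventually.of_forall fun τ => hg0 τ)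
              (Filter.Eventually.of_forall fun τ hτ => hτ.1)
    have h1 : Real.exp (m * b) * W b ≤ Real.exp (m * a) * W a
        + Real.exp (m * b) * ∫ τ in Set.Ioi a, g τ := by
      have : Real.exp (m * b) * W b - ∫ τ in a..b, G τ ≤ Real.exp (m * a) * W a := by
        rw [← hua]; exact hub
      linarith [hint_le]
    have hexp_pos : (0:ℝ) < Real.exp (m * b) := Real.exp_pos _
    have h2 : W b ≤ (Real.exp (m * a) / Real.exp (m * b)) * W a + ∫ τ in Set.Ioi a, g τ := by
      rw [← mul_le_mul_iff_left₀ hexp_pos]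
      have hX : (Real.exp (m * a) / Real.exp (m * b) * W a + ∫ τ in Set.Ioi a, g τ)
          * Real.exp (m * b)
          = Real.exp (m * a) * W a + Real.exp (m * b) * ∫ τ in Set.Ioi a, g τ := by
        field_simp
      rw [hX]
      linarith [h1]
    have h3 : Real.exp (m * a) / Real.exp (m * b) = Real.exp (-(m * (b - a))) := by
      rw [← Real.exp_sub]; ring_nf
    rwa [h3] at h2
  rw [Metric.tendsto_atTop]
  intro ε hε
  have htail := tail_tendsto g hgint
  rw [Metric.tendsto_atTop] at htail
  obtain ⟨A, hA⟩ := htail (ε / 2) (by linarith)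
  set a : ℝ := max A 0 with hadef
  have ha0 : a ∈ Set.Ici (0:ℝ) := Set.mem_Ici.2 (le_max_right _ _)
  have htaila : ∫ τ in Set.Ioi a, g τ < ε / 2 := by
    have := hA a (le_max_left _ _)
    rw [Real.dist_eq, sub_zero] at this
    exact lt_of_abs_lt this
  have hWa : 0 ≤ W a := hW0 a ha0
  have hdecay : Tendsto (fun t => Real.exp (-(m * (t - a))) * W a) atTop (nhds 0) := by
    have h0 : Tendsto (fun t : ℝ => m * (t - a)) atTop atTop := by
      have := tendsto_atTop_add_const_right atTop (-a) (tendsto_id (α := ℝ))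
      have := this.const_mul_atTop hm
      simpa [sub_eq_add_neg] using this
    have h1 : Tendsto (fun t : ℝ => -(m * (t - a))) atTop atBot := tendsto_neg_atBot_iff.2 h0
    have := (Real.tendsto_exp_atBot.comp h1).mul_const (W a)
    simpa using this
  rw [Metric.tendsto_atTop] at hdecay
  obtain ⟨T, hT⟩ := hdecay (ε / 2) (by linarith)
  refine ⟨max T a, fun t ht => ?_⟩
  have hta : a ≤ t := le_trans (le_max_right _ _) ht
  have htT : T ≤ t := le_trans (le_max_left _ _) ht
  have hWt := key a ha0 t hta
  have hexpb := hT t htT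
  rw [Real.dist_eq, sub_zero] at hexpb
  have hexpb' : Real.exp (-(m * (t - a))) * W a < ε / 2 := lt_of_abs_lt hexpb
  have hWt0 : 0 ≤ W t := hW0 t (Set.mem_Ici.2 (le_trans (Set.mem_Ici.1 ha0) hta))
  rw [Real.dist_eq, sub_zero, abs_of_nonneg hWt0]
  linarith

lemma amgm_aux (m x y : ℝ) (hm : 0 < m) : 2 * (x * y) ≤ m * x ^ 2 + (1 / m) * y ^ 2 := by
  have h1 : 0 ≤ (m * x - y) ^ 2 := sq_nonneg _
  have h2 : (1 / m) * m = 1 := one_div_mul_cancel hm.ne'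
  nlinarith [mul_le_mul_of_nonneg_left h1 (le_of_lt (one_div_pos.2 hm))]

/-- **Asymptotic convergence of the pose and rate tracking errors (Theorem 2, assembled
form).**  If `Λ` is symmetric positive definite, `p̃` satisfies the stable filter
`ṗ̃ = −Λ p̃ + s` on `[0,∞)` with `s` continuous and square-integrable, `ν̃_r = P s` with
`P` continuous and uniformly bounded, `ν̃_r` continuously differentiable with uniformly
bounded derivative, and `ν̃ = ν̃_r − P Λ p̃`, then `p̃ → 0`, `ν̃_r → 0`, and `ν̃ → 0` as
`t → ∞`.  (Euclidean squared norms are expressed with dot products.) -/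
theorem pose_and_rate_tracking_convergence
    (Λ : Matrix (Fin 6) (Fin 6) ℝ) (hΛ : Λ.PosDef)
    (p s νr νr' νt : ℝ → Fin 6 → ℝ)
    (P : ℝ → Matrix (Fin 6) (Fin 6) ℝ)
    (hs_cont : ContinuousOn s (Set.Ici 0))
    (hsL2 : IntegrableOn (fun t => s t ⬝ᵥ s t) (Set.Ici 0))
    (hp : ∀ t ∈ Set.Ici (0 : ℝ),
      HasDerivWithinAt p (-(Λ *ᵥ p t) + s t) (Set.Ici 0) t)
    (hP_cont : ContinuousOn P (Set.Ici 0))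
    (hP_bd : ∃ c : ℝ, ∀ t ∈ Set.Ici (0 : ℝ), ∀ x : Fin 6 → ℝ,
      (P t *ᵥ x) ⬝ᵥ (P t *ᵥ x) ≤ c * (x ⬝ᵥ x))
    (hνr : ∀ t ∈ Set.Ici (0 : ℝ), νr t = P t *ᵥ s t)
    (hνr' : ∀ t ∈ Set.Ici (0 : ℝ), HasDerivWithinAt νr (νr' t) (Set.Ici 0) t)
    (hνr'_cont : ContinuousOn νr' (Set.Ici 0))
    (hνr'_bd : ∃ b : ℝ, ∀ t ∈ Set.Ici (0 : ℝ), νr' t ⬝ᵥ νr' t ≤ b)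
    (hνt : ∀ t ∈ Set.Ici (0 : ℝ), νt t = νr t - P t *ᵥ (Λ *ᵥ p t)) :
    Tendsto p atTop (nhds 0) ∧ Tendsto νr atTop (nhds 0) ∧
      Tendsto νt atTop (nhds 0) := by
  obtain ⟨c, hc⟩ := hP_bd
  obtain ⟨b, hb⟩ := hνr'_bd
  obtain ⟨m, hm, hcoer⟩ := posdef_coercive Λ hΛ
  obtain ⟨C, hC0, hCbd⟩ := mulVec_dot_bound Λ
  -- c is nonnegative
  have hc0 : 0 ≤ c := by
    have h1 := hc 0 Set.self_mem_Ici (Pi.single 0 1)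
    have h2 : (Pi.single 0 1 : Fin 6 → ℝ) ⬝ᵥ Pi.single 0 1 = 1 := by
      simp [dotProduct, Pi.single_apply]
    rw [h2, mul_one] at h1
    exact le_trans (dot_self_nonneg' _) h1
  -- continuity of p and νr on Ici 0
  have hpc : ContinuousOn p (Set.Ici 0) := fun t ht => (hp t ht).continuousWithinAt
  have hνrc : ContinuousOn νr (Set.Ici 0) := fun t ht => (hνr' t ht).continuousWithinAt
  -- ## Part 1 : p → 0
  set W : ℝ → ℝ := fun t => p t ⬝ᵥ p t with hWdef
  set g : ℝ → ℝ := fun t => (1 / m) * (s t ⬝ᵥ s t) with hgdef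
  have hWc : ContinuousOn W (Set.Ici 0) := continuous_dot_self.comp_continuousOn hpc
  have hW0 : ∀ t ∈ Set.Ici (0:ℝ), 0 ≤ W t := fun t _ => dot_self_nonneg' _
  have hgc : ContinuousOn g (Set.Ici 0) :=
    (continuous_dot_self.comp_continuousOn hs_cont).const_smul (1/m)
  have hg0 : ∀ t, 0 ≤ g t := fun t =>
    mul_nonneg (by positivity) (dot_self_nonneg' _)
  have hgint : IntegrableOn g (Set.Ici 0) := hsL2.const_mul _
  have hW' : ∀ t ∈ Set.Ioi (0:ℝ), ∃ d, HasDerivAt W d t ∧ d ≤ -m * W t + g t := by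
    intro t ht
    have ht0 : t ∈ Set.Ici (0:ℝ) := Set.mem_Ici.2 (le_of_lt (Set.mem_Ioi.1 ht))
    have hpd : HasDerivAt p (-(Λ *ᵥ p t) + s t) t :=
      (hp t ht0).hasDerivAt (Ici_mem_nhds ht)
    set v : Fin 6 → ℝ := -(Λ *ᵥ p t) + s t with hvdef
    have hcomp : ∀ i, HasDerivAt (fun τ => p τ i) (v i) t := fun i => hasDerivAt_pi.1 hpd i
    have hsum : HasDerivAt (fun τ => ∑ i, p τ i * p τ i)
        (∑ i, (v i * p t i + p t i * v i)) t :=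
      HasDerivAt.fun_sum fun i _ => (hcomp i).mul (hcomp i)
    have hWder : HasDerivAt W (∑ i, (v i * p t i + p t i * v i)) t := by
      have : W = fun τ => ∑ i, p τ i * p τ i := rfl
      rw [this]; exact hsum
    refine ⟨_, hWder, ?_⟩
    have hdot : ∑ i, (v i * p t i + p t i * v i) = 2 * (p t ⬝ᵥ v) := by
      simp only [dotProduct, Finset.mul_sum]
      exact Finset.sum_congr rfl fun i _ => by ring
    rw [hdot, hvdef]
    have hsplit : p t ⬝ᵥ (-(Λ *ᵥ p t) + s t) = -(p t ⬝ᵥ (Λ *ᵥ p t)) + p t ⬝ᵥ s t := by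
      rw [dotProduct_add, dotProduct_neg]
    rw [hsplit]
    have h1 : m * (p t ⬝ᵥ p t) ≤ p t ⬝ᵥ (Λ *ᵥ p t) := hcoer (p t)
    have h2 : p t ⬝ᵥ s t ≤ Real.sqrt (p t ⬝ᵥ p t) * Real.sqrt (s t ⬝ᵥ s t) :=
      dot_cauchy' _ _
    have h3 := amgm_aux m (Real.sqrt (p t ⬝ᵥ p t)) (Real.sqrt (s t ⬝ᵥ s t)) hm
    rw [Real.sq_sqrt (dot_self_nonneg' (p t)), Real.sq_sqrt (dot_self_nonneg' (s t))] at h3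
    simp only [hWdef, hgdef]
    linarith
  have hWtend : Tendsto W atTop (nhds 0) := decay W g m hm hWc hW0 hgc hg0 hgint hW'
  have hsqrtW : Tendsto (fun t => Real.sqrt (W t)) atTop (nhds 0) := by
    have := (Real.continuous_sqrt.tendsto' 0 0 Real.sqrt_zero).comp hWtend
    exact this
  have hptend : Tendsto p atTop (nhds 0) := by
    rw [tendsto_zero_iff_norm_tendsto_zero]
    exact squeeze_zero (fun t => norm_nonneg _) (fun t => norm_le_sqrt_dot (p t)) hsqrtW
  -- ## Part 2 : νr → 0
  have hb0 : 0 ≤ b := le_trans (dot_self_nonneg' _) (hb 0 Set.self_mem_Ici)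
  set L : ℝ := Real.sqrt b + 1 with hLdef
  have hL : 0 < L := by positivity
  have hlip : LipschitzOnWith (Real.toNNReal L) νr (Set.Ici 0) := by
    apply (convex_Ici (0:ℝ)).lipschitzOnWith_of_nnnorm_hasDerivWithin_le
      (f' := νr') (fun x hx => hνr' x hx)
    intro x hx
    rw [← NNReal.coe_le_coe, coe_nnnorm, Real.coe_toNNReal _ hL.le]
    calc ‖νr' x‖ ≤ Real.sqrt (νr' x ⬝ᵥ νr' x) := norm_le_sqrt_dot _
      _ ≤ Real.sqrt b := Real.sqrt_le_sqrt (hb x hx)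
      _ ≤ L := by rw [hLdef]; linarith
  have hνrint : IntegrableOn (fun t => νr t ⬝ᵥ νr t) (Set.Ici 0) := by
    apply MeasureTheory.Integrable.mono' (hsL2.const_mul c)
    · exact (continuous_dot_self.comp_continuousOn hνrc).aestronglyMeasurable measurableSet_Ici
    · apply (MeasureTheory.ae_restrict_iff' measurableSet_Ici).2
      apply Filter.Eventually.of_forall
      intro t ht
      rw [Real.norm_eq_abs, abs_of_nonneg (dot_self_nonneg' _), hνr t ht]
      exact hc t ht (s t)
  have hνrtend : Tendsto νr atTop (nhds 0) := by
    apply barbalatL2 νr L hL _ hνrint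
    intro t₁ ht₁ t₂ ht₂
    have := hlip.dist_le_mul t₁ ht₁ t₂ ht₂
    rw [dist_eq_norm, Real.dist_eq] at this
    calc ‖νr t₁ - νr t₂‖ ≤ (Real.toNNReal L : ℝ) * |t₁ - t₂| := this
      _ = L * |t₁ - t₂| := by rw [Real.coe_toNNReal _ hL.le]
  -- ## Part 3 : νt → 0
  set q : ℝ → Fin 6 → ℝ := fun t => P t *ᵥ (Λ *ᵥ p t) with hqdef
  have hqtend : Tendsto q atTop (nhds 0) := by
    rw [tendsto_zero_iff_norm_tendsto_zero]
    have hbound : ∀ᶠ t in atTop, ‖q t‖ ≤ Real.sqrt (c * C) * Real.sqrt (W t) := by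
      filter_upwards [eventually_ge_atTop (0:ℝ)] with t ht
      have h1 : q t ⬝ᵥ q t ≤ c * ((Λ *ᵥ p t) ⬝ᵥ (Λ *ᵥ p t)) := hc t ht _
      have h2 : (Λ *ᵥ p t) ⬝ᵥ (Λ *ᵥ p t) ≤ C * (p t ⬝ᵥ p t) := hCbd _
      have h3 : q t ⬝ᵥ q t ≤ (c * C) * W t := by
        calc q t ⬝ᵥ q t ≤ c * ((Λ *ᵥ p t) ⬝ᵥ (Λ *ᵥ p t)) := h1
          _ ≤ c * (C * (p t ⬝ᵥ p t)) := mul_le_mul_of_nonneg_left h2 hc0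
          _ = (c * C) * W t := by rw [hWdef]; ring
      calc ‖q t‖ ≤ Real.sqrt (q t ⬝ᵥ q t) := norm_le_sqrt_dot _
        _ ≤ Real.sqrt ((c * C) * W t) := Real.sqrt_le_sqrt h3
        _ = Real.sqrt (c * C) * Real.sqrt (W t) :=
            Real.sqrt_mul (mul_nonneg hc0 hC0) _
    apply squeeze_zero' (Filter.Eventually.of_forall fun t => norm_nonneg _) hbound
    have := hsqrtW.const_mul (Real.sqrt (c * C))
    simpa using this
  have hνttend : Tendsto νt atTop (nhds 0) := by
    have hsub : Tendsto (fun t => νr t - q t) atTop (nhds 0) := by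
      have := hνrtend.sub hqtend
      simpa using this
    apply hsub.congr'
    filter_upwards [eventually_ge_atTop (0:ℝ)] with t ht
    exact (hνt t ht).symm
  exact ⟨hptend, hνrtend, hνttend⟩
end

section
/- Lemma 2 (filtered error relation for the quaternion parameterization): let r, r_d : ℝ → ℝ³ be differentiable, let ω, ω_d : ℝ → ℝ³, and let δε : ℝ → ℝ³, δη : ℝ → ℝ be differentiable functions satisfying the quaternion-error kinematic relation δε̇(t) = −ω_d(t)^× δε(t) + ½(δη(t) I₃ + δε(t)^×)(ω(t) − ω_d(t)). Assume δη(t) I₃ + δε(t)^× is invertible for all t, and let Λ ∈ ℝ^{6×6} be symmetric positive definite. Define p̃(t) := (r(t) − r_d(t), δε(t)) ∈ ℝ⁶, s(t) := ṗ̃(t) + Λ p̃(t), P(t) := blkdiag(I₃, 2(δη(t) I₃ + δε(t)^×)⁻¹), ν(t) := (ṙ(t), ω(t)), ν_d(t) := (ṙ_d(t), ω_d(t) + 2(δη(t) I₃ + δε(t)^×)⁻¹ ω_d(t)^× δε(t)), and ν_r(t) := ν_d(t) − P(t) Λ p̃(t). Then ν(t) − ν_r(t) = P(t) s(t) for all t.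 -/
open Matrix

/-- The cross (skew-symmetric) operator `v^×` with `v^× w = v × w`. -/
def crossMat (v : Fin 3 → ℝ) : Matrix (Fin 3) (Fin 3) ℝ :=
  !![0, -v 2, v 1; v 2, 0, -v 0; -v 1, v 0, 0]

/-- Concatenation of two vectors in `ℝ³` into a vector in `ℝ⁶`. -/
def vcat (a b : Fin 3 → ℝ) : Fin 6 → ℝ := Fin.append a b

/-- Block-diagonal `6 × 6` matrix with `3 × 3` diagonal blocks `A` and `B`. -/
def blkdiag (A B : Matrix (Fin 3) (Fin 3) ℝ) : Matrix (Fin 6) (Fin 6) ℝ :=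
  Matrix.reindex finSumFinEquiv finSumFinEquiv (Matrix.fromBlocks A 0 0 B)


lemma vcat_eq (a b : Fin 3 → ℝ) : vcat a b = Sum.elim a b ∘ finSumFinEquiv.symm := by
  funext i
  rcases (finSumFinEquiv (m:=3) (n:=3)).surjective i with ⟨j, rfl⟩
  cases j with
  | inl j =>
    simp only [Function.comp_apply, Equiv.symm_apply_apply, Sum.elim_inl, vcat]
    rw [finSumFinEquiv_apply_left]
    exact Fin.append_left a b j
  | inr j =>
    simp only [Function.comp_apply, Equiv.symm_apply_apply, Sum.elim_inr, vcat]
    rw [finSumFinEquiv_apply_right]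
    exact Fin.append_right a b j

lemma vcat_sub (a b c d : Fin 3 → ℝ) : vcat a b - vcat c d = vcat (a - c) (b - d) := by
  simp only [vcat_eq]; funext i
  rcases (finSumFinEquiv (m:=3) (n:=3)).surjective i with ⟨j, rfl⟩
  cases j <;> simp

lemma blkdiag_mulVec (A B : Matrix (Fin 3) (Fin 3) ℝ) (a b : Fin 3 → ℝ) :
    blkdiag A B *ᵥ vcat a b = vcat (A *ᵥ a) (B *ᵥ b) := by
  simp only [vcat_eq, blkdiag, reindex_apply, submatrix_mulVec_equiv,
    Equiv.symm_symm]
  funext i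
  rcases (finSumFinEquiv (m:=3) (n:=3)).surjective i with ⟨j, rfl⟩
  have : ((Sum.elim a b ∘ ⇑finSumFinEquiv.symm) ∘ ⇑finSumFinEquiv) = Sum.elim a b := by
    funext k; simp
  rw [this]
  cases j <;> simp [fromBlocks_mulVec]

/-- **Lemma 2 (filtered error relation for the quaternion parameterization).**
With quaternion error `(δε, δη)` satisfying
`δε̇ = −ω_d^× δε + ½(δη I₃ + δε^×)(ω − ω_d)` and `δη I₃ + δε^×` invertible,
pose error `p̃ = (r − r_d, δε)`, filtered error `s = ṗ̃ + Λ p̃`,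
`P = blkdiag(I₃, 2(δη I₃ + δε^×)⁻¹)`, `ν = (ṙ, ω)`,
`ν_d = (ṙ_d, ω_d + 2(δη I₃ + δε^×)⁻¹ ω_d^× δε)`, and `ν_r = ν_d − P Λ p̃`,
one has `ν − ν_r = P s` for all `t`. -/
theorem filtered_error_quaternion
    (r r' rd rd' ω ωd : ℝ → Fin 3 → ℝ)
    (δε δε' : ℝ → Fin 3 → ℝ) (δη δη' : ℝ → ℝ)
    (Λ : Matrix (Fin 6) (Fin 6) ℝ) (hΛ : Λ.PosDef)
    (hr : ∀ t, HasDerivAt r (r' t) t)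
    (hrd : ∀ t, HasDerivAt rd (rd' t) t)
    (hδε : ∀ t, HasDerivAt δε (δε' t) t)
    (hδη : ∀ t, HasDerivAt δη (δη' t) t)
    (hkin : ∀ t, δε' t = -(crossMat (ωd t) *ᵥ δε t) +
      (1 / 2 : ℝ) • ((δη t • (1 : Matrix (Fin 3) (Fin 3) ℝ) + crossMat (δε t)) *ᵥ
        (ω t - ωd t)))
    (hinv : ∀ t, IsUnit (δη t • (1 : Matrix (Fin 3) (Fin 3) ℝ) + crossMat (δε t)).det)
    (ptil s ν νd νr : ℝ → Fin 6 → ℝ)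
    (P : ℝ → Matrix (Fin 6) (Fin 6) ℝ)
    (hptil : ∀ t, ptil t = vcat (r t - rd t) (δε t))
    (hsdef : ∀ t, s t = vcat (r' t - rd' t) (δε' t) + Λ *ᵥ ptil t)
    (hP : ∀ t, P t = blkdiag 1
      ((2 : ℝ) • (δη t • (1 : Matrix (Fin 3) (Fin 3) ℝ) + crossMat (δε t))⁻¹))
    (hν : ∀ t, ν t = vcat (r' t) (ω t))
    (hνd : ∀ t, νd t = vcat (rd' t) (ωd t +
      (2 : ℝ) • ((δη t • (1 : Matrix (Fin 3) (Fin 3) ℝ) + crossMat (δε t))⁻¹ *ᵥ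
        (crossMat (ωd t) *ᵥ δε t))))
    (hνr : ∀ t, νr t = νd t - P t *ᵥ (Λ *ᵥ ptil t)) :
    ∀ t, ν t - νr t = P t *ᵥ s t := by
  intro t
  have hAi : (δη t • (1 : Matrix (Fin 3) (Fin 3) ℝ) + crossMat (δε t))⁻¹ *
      (δη t • (1 : Matrix (Fin 3) (Fin 3) ℝ) + crossMat (δε t)) = 1 :=
    Matrix.nonsing_inv_mul _ (hinv t)
  have hkey : ((2 : ℝ) • (δη t • (1 : Matrix (Fin 3) (Fin 3) ℝ) + crossMat (δε t))⁻¹) *ᵥ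
      δε' t = ω t - (ωd t +
        (2 : ℝ) • ((δη t • (1 : Matrix (Fin 3) (Fin 3) ℝ) + crossMat (δε t))⁻¹ *ᵥ
          (crossMat (ωd t) *ᵥ δε t))) := by
    rw [hkin t]
    simp only [Matrix.smul_mul, smul_mulVec, Matrix.mulVec_add, Matrix.mulVec_neg,
      Matrix.mulVec_smul, Matrix.mulVec_mulVec, hAi, Matrix.one_mulVec, smul_smul]
    norm_num
    module
  rw [hν t, hνr t, hνd t, hsdef t, hP t, Matrix.mulVec_add, blkdiag_mulVec,
    Matrix.one_mulVec, hkey, ← hP t, ← vcat_sub]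
  abel
end

section
/- Time derivative of the projected attitude error (key computation in the proof of Lemma 3): let C : ℝ → ℝ^{3×3} be differentiable and ω̃ : ℝ → ℝ³ be such that Ċ(t) = −ω̃(t)^× C(t) for all t. Then d/dt (𝒫(C(t))^V) = −½ (tr(C(t)) I₃ − C(t)) ω̃(t) for all t. -/
open Matrix

attribute [local instance] Matrix.normedAddCommGroup Matrix.normedSpace

/-- The uncross operator `(·)^V`, the inverse of `crossMat` on skew-symmetric
matrices. -/
def uncross (A : Matrix (Fin 3) (Fin 3) ℝ) : Fin 3 → ℝ := ![A 2 1, A 0 2, A 1 0]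

/-- The antisymmetric projection operator `𝒫(U) = ½(U − Uᵀ)`. -/
noncomputable def projAnti (U : Matrix (Fin 3) (Fin 3) ℝ) : Matrix (Fin 3) (Fin 3) ℝ :=
  (1 / 2 : ℝ) • (U - Uᵀ)

/-- **Time derivative of the projected attitude error (key computation in the proof of
Lemma 3).**  If `Ċ(t) = −ω̃(t)^× C(t)`, then
`d/dt (𝒫(C(t))^V) = −½ (tr(C(t)) I₃ − C(t)) ω̃(t)` for all `t`. -/
theorem deriv_projected_attitude_error
    (C : ℝ → Matrix (Fin 3) (Fin 3) ℝ) (ωtil : ℝ → Fin 3 → ℝ)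
    (hC : ∀ t, HasDerivAt C (-(crossMat (ωtil t) * C t)) t) :
    ∀ t, HasDerivAt (fun τ => uncross (projAnti (C τ)))
      (-((1 / 2 : ℝ) •
        (((Matrix.trace (C t)) • (1 : Matrix (Fin 3) (Fin 3) ℝ) - C t) *ᵥ ωtil t))) t := by
  intro t
  have hent : ∀ i j : Fin 3,
      HasDerivAt (fun τ => C τ i j) ((-(crossMat (ωtil t) * C t)) i j) t := by
    intro i j
    have e : Matrix (Fin 3) (Fin 3) ℝ →L[ℝ] ℝ :=
      LinearMap.toContinuousLinearMap (Matrix.entryLinearMap ℝ ℝ i j)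
    exact (LinearMap.toContinuousLinearMap
      (Matrix.entryLinearMap ℝ ℝ i j)).hasFDerivAt.comp_hasDerivAt t (hC t)
  rw [hasDerivAt_pi]
  have fin : ∀ (a b c d : Fin 3),
      HasDerivAt (fun τ => 1/2 * (C τ a b - C τ c d))
        (1/2 * ((-(crossMat (ωtil t) * C t)) a b - (-(crossMat (ωtil t) * C t)) c d)) t :=
    fun a b c d => ((hent a b).sub (hent c d)).const_mul (1/2)
  intro i
  fin_cases i
  · refine (fin 2 1 1 2).congr_deriv ?_ |>.congr_of_eventuallyEq (.of_forall fun τ => ?_)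
    · simp [crossMat, Matrix.mul_apply, Fin.sum_univ_three, Matrix.mulVec, dotProduct, Matrix.vecMul, Matrix.transpose_apply,
        Matrix.trace, Matrix.diag, Matrix.one_apply]
      ring
    · simp [uncross, projAnti]; try ring
  · refine (fin 0 2 2 0).congr_deriv ?_ |>.congr_of_eventuallyEq (.of_forall fun τ => ?_)
    · simp [crossMat, Matrix.mul_apply, Fin.sum_univ_three, Matrix.mulVec, dotProduct, Matrix.vecMul, Matrix.transpose_apply,
        Matrix.trace, Matrix.diag, Matrix.one_apply]
      ring
    · simp [uncross, projAnti]; try ring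
  · refine (fin 1 0 0 1).congr_deriv ?_ |>.congr_of_eventuallyEq (.of_forall fun τ => ?_)
    · simp [crossMat, Matrix.mul_apply, Fin.sum_univ_three, Matrix.mulVec, dotProduct, Matrix.vecMul, Matrix.transpose_apply,
        Matrix.trace, Matrix.diag, Matrix.one_apply]
      ring
    · simp [uncross, projAnti]; try ring
end

section
/- Nonsingularity of the SO(3) error mapping matrix: for every C ∈ SO(3), det(tr(C) I₃ − C) = tr(C)² − 1. Consequently, tr(C) I₃ − C is invertible if and only if tr(C) ≠ 1 and tr(C) ≠ −1; in particular it is invertible whenever tr(C) > 1 (i.e., whenever C is a rotation by an angle strictly less than π/2 in magnitude). -/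
open Matrix

/-- **Nonsingularity of the SO(3) error mapping matrix.**
For every `C ∈ SO(3)` (i.e. `CᵀC = I₃`, `det C = 1`),
`det(tr(C) I₃ − C) = tr(C)² − 1`; hence `tr(C) I₃ − C` is invertible iff
`tr(C) ≠ 1` and `tr(C) ≠ −1`, and in particular whenever `tr(C) > 1`. -/
theorem SO3_error_matrix_nonsingular
    (C : Matrix (Fin 3) (Fin 3) ℝ) (hC : Cᵀ * C = 1) (hdet : C.det = 1) :
    ((Matrix.trace C) • (1 : Matrix (Fin 3) (Fin 3) ℝ) - C).det =
      (Matrix.trace C) ^ 2 - 1 ∧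
    (IsUnit ((Matrix.trace C) • (1 : Matrix (Fin 3) (Fin 3) ℝ) - C) ↔
      Matrix.trace C ≠ 1 ∧ Matrix.trace C ≠ -1) ∧
    (1 < Matrix.trace C →
      IsUnit ((Matrix.trace C) • (1 : Matrix (Fin 3) (Fin 3) ℝ) - C)) := by
  -- C is invertible with inverse Cᵀ, so adjugate C = det C • C⁻¹ = Cᵀ
  have hinv : C * Cᵀ = 1 := mul_eq_one_comm.mp hC
  have hadj : C.adjugate = Cᵀ := by
    have h1 : C * C.adjugate = C.det • 1 := Matrix.mul_adjugate C
    have := congrArg (Cᵀ * ·) h1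
    simpa [← Matrix.mul_assoc, hC, hdet] using this
  have h00 : C.adjugate 0 0 = C 0 0 := by rw [hadj]; rfl
  have h11 : C.adjugate 1 1 = C 1 1 := by rw [hadj]; rfl
  have h22 : C.adjugate 2 2 = C 2 2 := by rw [hadj]; rfl
  rw [Matrix.adjugate_fin_three] at h00 h11 h22
  simp only [Matrix.cons_val', Matrix.cons_val_zero, Matrix.cons_val_one, Matrix.head_cons,
    Matrix.empty_val', Matrix.cons_val_fin_one, Matrix.head_fin_const, Matrix.cons_val_two,
    Matrix.tail_cons, Matrix.of_apply] at h00 h11 h22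
  rw [Matrix.det_fin_three] at hdet
  have key : ((Matrix.trace C) • (1 : Matrix (Fin 3) (Fin 3) ℝ) - C).det =
      (Matrix.trace C) ^ 2 - 1 := by
    rw [Matrix.det_fin_three, Matrix.trace_fin_three, Matrix.one_fin_three]
    simp [Matrix.sub_apply, Matrix.smul_apply, smul_eq_mul, Matrix.vecHead, Matrix.vecTail, Function.comp]
    linear_combination (C 0 0 + C 1 1 + C 2 2) * h00 + (C 0 0 + C 1 1 + C 2 2) * h11 +
      (C 0 0 + C 1 1 + C 2 2) * h22 - hdet
  refine ⟨key, ?_, ?_⟩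
  · rw [Matrix.isUnit_iff_isUnit_det, key, isUnit_iff_ne_zero]
    constructor
    · intro h
      constructor <;> intro h' <;> rw [h'] at h <;> norm_num at h
    · rintro ⟨h1, h2⟩ h
      rcases mul_eq_zero.mp (by linear_combination h : (Matrix.trace C - 1) * (Matrix.trace C + 1) = 0) with h' | h'
      · exact h1 (by linarith)
      · exact h2 (by linarith)
  · intro ht
    rw [Matrix.isUnit_iff_isUnit_det, key, isUnit_iff_ne_zero]
    nlinarith
end
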